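/- Every rc-space is completely regular. -/

import Mathlib

open Set Filter TopologicalSpace Topology Filter

namespace RCUrysohn

variable {X : Type*} [TopologicalSpace X]

/-- A variant of `Urysohns.CU` carrying invariants `P` on the closed set and `Q` on the
open set. -/
structure CU (P Q : Set X → Prop) where
  protected C : Set X
  protected U : Set X
  protected P_C : P C
  protected Q_U : Q U
  protected closed_C : IsClosed C
  protected open_U : IsOpen U
  protected subset : C ⊆ U
  protected hP : ∀ {c u : Set X}, IsClosed c → P c → IsOpen u → Q u → c ⊆ u →
    ∃ v, IsOpen v ∧ Q v ∧ c ⊆ v ∧ closure v ⊆ u ∧ P (closure v)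

namespace CU

variable {P Q : Set X → Prop}

def left (c : CU P Q) : CU P Q where
  C := c.C
  U := (c.hP c.closed_C c.P_C c.open_U c.Q_U c.subset).choose
  closed_C := c.closed_C
  P_C := c.P_C
  open_U := (c.hP c.closed_C c.P_C c.open_U c.Q_U c.subset).choose_spec.1
  Q_U := (c.hP c.closed_C c.P_C c.open_U c.Q_U c.subset).choose_spec.2.1
  subset := (c.hP c.closed_C c.P_C c.open_U c.Q_U c.subset).choose_spec.2.2.1
  hP := c.hP

def right (c : CU P Q) : CU P Q where
  C := closure (c.hP c.closed_C c.P_C c.open_U c.Q_U c.subset).choose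
  U := c.U
  closed_C := isClosed_closure
  P_C := (c.hP c.closed_C c.P_C c.open_U c.Q_U c.subset).choose_spec.2.2.2.2
  open_U := c.open_U
  Q_U := c.Q_U
  subset := (c.hP c.closed_C c.P_C c.open_U c.Q_U c.subset).choose_spec.2.2.2.1
  hP := c.hP

theorem left_U_subset_right_C (c : CU P Q) : c.left.U ⊆ c.right.C :=
  subset_closure

theorem left_U_subset (c : CU P Q) : c.left.U ⊆ c.U :=
  Subset.trans c.left_U_subset_right_C c.right.subset

theorem subset_right_C (c : CU P Q) : c.C ⊆ c.right.C :=
  Subset.trans c.left.subset c.left_U_subset_right_C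

noncomputable def approx : ℕ → CU P Q → X → ℝ
  | 0, c, x => indicator c.Uᶜ 1 x
  | n + 1, c, x => midpoint ℝ (approx n c.left x) (approx n c.right x)

theorem approx_of_mem_C (c : CU P Q) (n : ℕ) {x : X} (hx : x ∈ c.C) : c.approx n x = 0 := by
  induction n generalizing c with
  | zero => exact indicator_of_notMem (fun (hU : x ∈ c.Uᶜ) => hU <| c.subset hx) _
  | succ n ihn =>
    simp only [approx]
    rw [ihn, ihn, midpoint_self]
    exacts [c.subset_right_C hx, hx]

theorem approx_of_nmem_U (c : CU P Q) (n : ℕ) {x : X} (hx : x ∉ c.U) : c.approx n x = 1 := by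
  induction n generalizing c with
  | zero =>
    rw [← mem_compl_iff] at hx
    exact indicator_of_mem hx _
  | succ n ihn =>
    simp only [approx]
    rw [ihn, ihn, midpoint_self]
    exacts [hx, fun hU => hx <| c.left_U_subset hU]

theorem approx_nonneg (c : CU P Q) (n : ℕ) (x : X) : 0 ≤ c.approx n x := by
  induction n generalizing c with
  | zero => exact indicator_nonneg (fun _ _ => zero_le_one) _
  | succ n ihn =>
    simp only [approx, midpoint_eq_smul_add, invOf_eq_inv]
    refine mul_nonneg (inv_nonneg.2 zero_le_two) (add_nonneg ?_ ?_) <;> apply ihn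

theorem approx_le_one (c : CU P Q) (n : ℕ) (x : X) : c.approx n x ≤ 1 := by
  induction n generalizing c with
  | zero => exact indicator_apply_le' (fun _ => le_rfl) fun _ => zero_le_one
  | succ n ihn =>
    simp only [approx, midpoint_eq_smul_add, invOf_eq_inv, smul_eq_mul, ← div_eq_inv_mul]
    have := add_le_add (ihn (left c)) (ihn (right c))
    norm_num at this
    exact Iff.mpr (div_le_one zero_lt_two) this

theorem bddAbove_range_approx (c : CU P Q) (x : X) : BddAbove (range fun n => c.approx n x) :=
  ⟨1, fun _ ⟨n, hn⟩ => hn ▸ c.approx_le_one n x⟩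

theorem approx_le_approx_of_U_sub_C {c₁ c₂ : CU P Q} (h : c₁.U ⊆ c₂.C) (n₁ n₂ : ℕ) (x : X) :
    c₂.approx n₂ x ≤ c₁.approx n₁ x := by
  by_cases hx : x ∈ c₁.U
  · calc
      approx n₂ c₂ x = 0 := approx_of_mem_C _ _ (h hx)
      _ ≤ approx n₁ c₁ x := approx_nonneg _ _ _
  · calc
      approx n₂ c₂ x ≤ 1 := approx_le_one _ _ _
      _ = approx n₁ c₁ x := (approx_of_nmem_U _ _ hx).symm

theorem approx_mem_Icc_right_left (c : CU P Q) (n : ℕ) (x : X) :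
    c.approx n x ∈ Icc (c.right.approx n x) (c.left.approx n x) := by
  induction' n with n ihn generalizing c
  · exact ⟨le_rfl, indicator_le_indicator_of_subset (compl_subset_compl.2 c.left_U_subset)
      (fun _ => zero_le_one) _⟩
  · simp only [approx, mem_Icc]
    refine ⟨midpoint_le_midpoint ?_ (ihn _).1, midpoint_le_midpoint (ihn _).2 ?_⟩ <;>
      apply approx_le_approx_of_U_sub_C
    exacts [subset_closure, subset_closure]

theorem approx_le_succ (c : CU P Q) (n : ℕ) (x : X) : c.approx n x ≤ c.approx (n + 1) x := by
  induction' n with n ihn generalizing c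
  · show c.approx 0 x ≤ midpoint ℝ (c.left.approx 0 x) (c.right.approx 0 x)
    rw [show c.approx 0 x = c.right.approx 0 x from rfl, right_le_midpoint]
    exact (approx_mem_Icc_right_left c 0 x).2
  · rw [approx, approx]
    exact midpoint_le_midpoint (ihn _) (ihn _)

theorem approx_mono (c : CU P Q) (x : X) : Monotone fun n => c.approx n x :=
  monotone_nat_of_le_succ fun n => c.approx_le_succ n x

protected noncomputable def lim (c : CU P Q) (x : X) : ℝ :=
  ⨆ n, c.approx n x

theorem tendsto_approx_atTop (c : CU P Q) (x : X) :
    Tendsto (fun n => c.approx n x) atTop (𝓝 <| c.lim x) :=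
  tendsto_atTop_ciSup (c.approx_mono x) ⟨1, fun _ ⟨_, hn⟩ => hn ▸ c.approx_le_one _ _⟩

theorem lim_of_mem_C (c : CU P Q) (x : X) (h : x ∈ c.C) : c.lim x = 0 := by
  simp only [CU.lim, approx_of_mem_C, h, ciSup_const]

theorem lim_of_nmem_U (c : CU P Q) (x : X) (h : x ∉ c.U) : c.lim x = 1 := by
  simp only [CU.lim, approx_of_nmem_U c _ h, ciSup_const]

theorem lim_eq_midpoint (c : CU P Q) (x : X) :
    c.lim x = midpoint ℝ (c.left.lim x) (c.right.lim x) := by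
  refine tendsto_nhds_unique (c.tendsto_approx_atTop x) ((tendsto_add_atTop_iff_nat 1).1 ?_)
  simp only [approx]
  exact (c.left.tendsto_approx_atTop x).midpoint (c.right.tendsto_approx_atTop x)

theorem approx_le_lim (c : CU P Q) (x : X) (n : ℕ) : c.approx n x ≤ c.lim x :=
  le_ciSup (c.bddAbove_range_approx x) _

theorem lim_nonneg (c : CU P Q) (x : X) : 0 ≤ c.lim x :=
  (c.approx_nonneg 0 x).trans (c.approx_le_lim x 0)

theorem lim_le_one (c : CU P Q) (x : X) : c.lim x ≤ 1 :=
  ciSup_le fun _ => c.approx_le_one _ _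

theorem lim_mem_Icc (c : CU P Q) (x : X) : c.lim x ∈ Icc (0 : ℝ) 1 :=
  ⟨c.lim_nonneg x, c.lim_le_one x⟩

theorem continuous_lim (c : CU P Q) : Continuous c.lim := by
  obtain ⟨h0, h1234, h1⟩ : 0 < (2⁻¹ : ℝ) ∧ (2⁻¹ : ℝ) < 3 / 4 ∧ (3 / 4 : ℝ) < 1 := by norm_num
  refine
    continuous_iff_continuousAt.2 fun x =>
      (Metric.nhds_basis_closedBall_pow (h0.trans h1234) h1).tendsto_right_iff.2 fun n _ => ?_
  simp only [Metric.mem_closedBall]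
  induction' n with n ihn generalizing c
  · filter_upwards with y
    rw [pow_zero]
    exact Real.dist_le_of_mem_Icc_01 (c.lim_mem_Icc _) (c.lim_mem_Icc _)
  · by_cases hxl : x ∈ c.left.U
    · filter_upwards [IsOpen.mem_nhds c.left.open_U hxl, ihn c.left] with _ hyl hyd
      rw [pow_succ', c.lim_eq_midpoint, c.lim_eq_midpoint,
        c.right.lim_of_mem_C _ (c.left_U_subset_right_C hyl),
        c.right.lim_of_mem_C _ (c.left_U_subset_right_C hxl)]
      refine (dist_midpoint_midpoint_le _ _ _ _).trans ?_
      rw [dist_self, add_zero, div_eq_inv_mul]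
      gcongr
    · replace hxl : x ∈ c.left.right.Cᶜ :=
        compl_subset_compl.2 c.left.right.subset hxl
      filter_upwards [IsOpen.mem_nhds (isOpen_compl_iff.2 c.left.right.closed_C) hxl,
        ihn c.left.right, ihn c.right] with y hyl hydl hydr
      replace hxl : x ∉ c.left.left.U :=
        compl_subset_compl.2 c.left.left_U_subset_right_C hxl
      replace hyl : y ∉ c.left.left.U :=
        compl_subset_compl.2 c.left.left_U_subset_right_C hyl
      simp only [pow_succ, c.lim_eq_midpoint, c.left.lim_eq_midpoint,
        c.left.left.lim_of_nmem_U _ hxl, c.left.left.lim_of_nmem_U _ hyl]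
      refine (dist_midpoint_midpoint_le _ _ _ _).trans ?_
      refine (div_le_div_of_nonneg_right (add_le_add_left (dist_midpoint_midpoint_le _ _ _ _) _)
        zero_le_two).trans ?_
      rw [dist_self, zero_add]
      set r := (3 / 4 : ℝ) ^ n
      calc _ ≤ (r / 2 + r) / 2 := by gcongr
        _ = _ := by field_simp; ring

end CU

end RCUrysohn

/-- The closure of an open set is regular closed. -/
theorem regClosed_closure_of_isOpen {X : Type*} [TopologicalSpace X] {v : Set X}
    (hv : IsOpen v) : closure v = closure (interior (closure v)) := by
  apply subset_antisymm
  · exact closure_mono (hv.subset_interior_iff.2 subset_closure)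
  · exact closure_minimal interior_subset isClosed_closure

/-- Every rc-space is completely regular: if `X` is a regular T1 space in which any two
disjoint regular closed sets have disjoint open neighbourhoods, then `X` is completely
regular. -/
theorem rc_space_completely_regular {X : Type*} [TopologicalSpace X]
    [T1Space X] [RegularSpace X]
    (hrc : ∀ F G : Set X, F = closure (interior F) → G = closure (interior G) →
      Disjoint F G →
      ∃ U V : Set X, IsOpen U ∧ IsOpen V ∧ F ⊆ U ∧ G ⊆ V ∧ Disjoint U V) :
    CompletelyRegularSpace X := by
  rw [completelyRegularSpace_iff]
  intro x K hK hx
  -- interpolation property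
  have key : ∀ {c u : Set X}, IsClosed c → c = closure (interior c) → IsOpen u →
      u = interior (closure u) → c ⊆ u →
      ∃ v, IsOpen v ∧ v = interior (closure v) ∧ c ⊆ v ∧ closure v ⊆ u ∧
        closure v = closure (interior (closure v)) := by
    intro c u hc hcP hu huQ hcu
    -- `uᶜ` is regular closed
    have hucP : uᶜ = closure (interior uᶜ) := by
      rw [interior_compl, closure_compl, ← huQ]
    have hdisj : Disjoint c uᶜ := Set.disjoint_compl_right_iff_subset.2 hcu
    obtain ⟨W, W', hW, hW', hcW, huW', hWW'⟩ := hrc c uᶜ hcP hucP hdisj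
    refine ⟨interior (closure W), isOpen_interior, ?_, ?_, ?_, ?_⟩
    · -- regular open
      apply subset_antisymm
      · exact isOpen_interior.subset_interior_iff.2 <| subset_closure
      · apply interior_mono
        exact closure_minimal interior_subset isClosed_closure
    · exact hcW.trans (hW.subset_interior_iff.2 subset_closure)
    · -- `closure (interior (closure W)) ⊆ u`
      have h1 : closure W ⊆ W'ᶜ :=
        closure_minimal (Set.subset_compl_iff_disjoint_right.2 hWW') hW'.isClosed_compl
      have h2 : W'ᶜ ⊆ u := by
        rw [← compl_compl u]; exact Set.compl_subset_compl.2 huW'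
      exact (closure_minimal interior_subset isClosed_closure).trans (h1.trans h2)
    · exact regClosed_closure_of_isOpen isOpen_interior
  -- construct the initial pair using regularity
  have hKc : Kᶜ ∈ 𝓝 x := hK.isOpen_compl.mem_nhds hx
  obtain ⟨t, ht_mem, ht_closed, htK⟩ := exists_mem_nhds_isClosed_subset hKc
  obtain ⟨t₂, ht₂_mem, ht₂_closed, ht₂⟩ :=
    exists_mem_nhds_isClosed_subset (interior_mem_nhds.2 ht_mem)
  -- C := closure (interior t₂), U := interior t
  set c : RCUrysohn.CU (fun s : Set X => s = closure (interior s))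
      (fun s : Set X => s = interior (closure s)) :=
  { C := closure (interior t₂)
    U := interior t
    P_C := regClosed_closure_of_isOpen isOpen_interior
    Q_U := by
      apply subset_antisymm
      · exact isOpen_interior.subset_interior_iff.2 subset_closure
      · exact interior_mono (closure_minimal interior_subset ht_closed)
    closed_C := isClosed_closure
    open_U := isOpen_interior
    subset := (closure_minimal interior_subset ht₂_closed).trans ht₂
    hP := fun {cc u} h1 h2 h3 h4 h5 => key h1 h2 h3 h4 h5 }
  have hxC : x ∈ c.C := subset_closure (mem_interior_iff_mem_nhds.2 ht₂_mem)
  have hKU : ∀ y ∈ K, y ∉ c.U := by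
    intro y hy hyU
    exact htK (interior_subset hyU) hy
  let g : X → unitInterval := fun y => ⟨c.lim y, c.lim_mem_Icc y⟩
  refine ⟨g, c.continuous_lim.subtype_mk _, Subtype.ext (c.lim_of_mem_C x hxC),
    fun y hy => Subtype.ext (c.lim_of_nmem_U y (hKU y hy))⟩
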